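/- For all finite simple graphs G₁ and G₂, the Shannon capacity of the disjoint union satisfies c(G₁ + G₂) ≥ c(G₁) + c(G₂). -/

import Mathlib

/-- The `k`-th strong power of a simple graph: vertices are `k`-tuples, and two distinct
tuples are adjacent iff in each coordinate the entries are equal or adjacent. -/
def gStrongPow {α : Type*} (G : SimpleGraph α) (k : ℕ) :
    SimpleGraph (Fin k → α) where
  Adj u v := u ≠ v ∧ ∀ i, u i = v i ∨ G.Adj (u i) (v i)
  symm := by
    constructor
    rintro u v ⟨hne, h⟩
    exact ⟨hne.symm, fun i => (h i).imp Eq.symm (fun h' => h'.symm)⟩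
  loopless := ⟨fun u h => h.1 rfl⟩
/-- The independence number of a graph on a finite vertex type: the maximum size of a
set of pairwise non-adjacent vertices. -/
noncomputable def gIndepNum {α : Type*} [Fintype α] (G : SimpleGraph α) : ℕ :=
  sSup {n | ∃ s : Finset α, s.card = n ∧ (s : Set α).Pairwise (fun a b => ¬ G.Adj a b)}
/-- The Shannon capacity `c(G) = sup_{k ≥ 1} α(G^k)^(1/k)`. -/
noncomputable def gShannonCapacity {α : Type*} [Fintype α] (G : SimpleGraph α) : ℝ :=
  ⨆ k : ℕ, (gIndepNum (gStrongPow G (k + 1)) : ℝ) ^ ((1 : ℝ) / (k + 1))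

section basics
variable {α : Type*} [Fintype α] {G : SimpleGraph α}

lemma gBdd (G : SimpleGraph α) :
    BddAbove {n | ∃ s : Finset α, s.card = n ∧ (s : Set α).Pairwise (fun a b => ¬ G.Adj a b)} := by
  refine ⟨Fintype.card α, fun n hn => ?_⟩
  obtain ⟨s, hs, -⟩ := hn
  exact hs ▸ s.card_le_univ

lemma card_le_gIndepNum {s : Finset α}
    (h : (s : Set α).Pairwise (fun a b => ¬ G.Adj a b)) : s.card ≤ gIndepNum G :=
  le_csSup (gBdd G) ⟨s, rfl, h⟩

lemma exists_gIndep (G : SimpleGraph α) :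
    ∃ s : Finset α, s.card = gIndepNum G ∧ (s : Set α).Pairwise (fun a b => ¬ G.Adj a b) :=
  by
  have h : (0:ℕ) ∈ {n | ∃ s : Finset α, s.card = n ∧ (s : Set α).Pairwise (fun a b => ¬ G.Adj a b)} :=
    ⟨∅, by simp⟩
  exact Nat.sSup_mem ⟨0, h⟩ (gBdd G)

lemma gIndepNum_le (G : SimpleGraph α) : gIndepNum G ≤ Fintype.card α := by
  obtain ⟨s, hs, -⟩ := exists_gIndep G
  exact hs ▸ s.card_le_univ

lemma one_le_gIndepNum [Nonempty α] (G : SimpleGraph α) : 1 ≤ gIndepNum G := by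
  have := card_le_gIndepNum (G := G) (s := {Classical.arbitrary α}) (by simp)
  simpa using this

lemma one_le_A0 {β : Type*} [Fintype β] (G : SimpleGraph β) :
    1 ≤ gIndepNum (gStrongPow G 0) :=
  one_le_gIndepNum _

end basics

section supermult
variable {α : Type*} [Fintype α] (G : SimpleGraph α)

lemma gIndepNum_mul_le (i j : ℕ) :
    gIndepNum (gStrongPow G i) * gIndepNum (gStrongPow G j) ≤
      gIndepNum (gStrongPow G (i + j)) := by
  classical
  obtain ⟨s, hs, hsi⟩ := exists_gIndep (gStrongPow G i)
  obtain ⟨t, ht, hti⟩ := exists_gIndep (gStrongPow G j)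
  have hinj : Function.Injective
      (fun p : (Fin i → α) × (Fin j → α) => Fin.append p.1 p.2) := by
    rintro ⟨u, v⟩ ⟨u', v'⟩ h
    simp only [Prod.mk.injEq]
    constructor
    · funext x
      have := congrFun h (Fin.castAdd j x)
      simpa [Fin.append_left] using this
    · funext x
      have := congrFun h (Fin.natAdd i x)
      simpa [Fin.append_right] using this
  have hcard : ((s ×ˢ t).image
      (fun p : (Fin i → α) × (Fin j → α) => Fin.append p.1 p.2)).card
      = gIndepNum (gStrongPow G i) * gIndepNum (gStrongPow G j) := by
    rw [Finset.card_image_of_injective _ hinj, Finset.card_product, hs, ht]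
  rw [← hcard]
  apply card_le_gIndepNum
  rintro w hw w' hw' hne hadj
  simp only [Finset.coe_image, Set.mem_image, Finset.mem_coe, Finset.mem_product] at hw hw'
  obtain ⟨⟨u, v⟩, ⟨hu, hv⟩, rfl⟩ := hw
  obtain ⟨⟨u', v'⟩, ⟨hu', hv'⟩, rfl⟩ := hw'
  obtain ⟨-, hco⟩ := hadj
  by_cases huu : u = u'
  · subst huu
    have hvv : v ≠ v' := fun h => hne (by rw [h])
    refine hti hv hv' hvv ⟨hvv, fun x => ?_⟩
    have := hco (Fin.natAdd i x)
    simpa [Fin.append_right] using this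
  · refine hsi hu hu' huu ⟨huu, fun x => ?_⟩
    have := hco (Fin.castAdd j x)
    simpa [Fin.append_left] using this

lemma gIndepNum_pow_le (m q : ℕ) :
    gIndepNum (gStrongPow G m) ^ q ≤ gIndepNum (gStrongPow G (m * q)) := by
  induction q with
  | zero => simpa using one_le_A0 G
  | succ q ih =>
    calc gIndepNum (gStrongPow G m) ^ (q + 1)
        = gIndepNum (gStrongPow G m) ^ q * gIndepNum (gStrongPow G m) := by ring
      _ ≤ gIndepNum (gStrongPow G (m * q)) * gIndepNum (gStrongPow G m) :=
          Nat.mul_le_mul_right _ ih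
      _ ≤ gIndepNum (gStrongPow G (m * q + m)) := gIndepNum_mul_le G _ _
      _ = gIndepNum (gStrongPow G (m * (q + 1))) := by rw [Nat.mul_succ]

end supermult

section mix
variable {α β : Type*} {n i : ℕ}

lemma gCompl_card (S : Finset (Fin n)) (hS : S.card = i) : Sᶜ.card = n - i := by
  rw [Finset.card_compl, hS, Fintype.card_fin]

/-- Interleave `u : Fin i → α` (on positions `S`) and `v` (on positions `Sᶜ`). -/
noncomputable def gMix (S : Finset (Fin n)) (hS : S.card = i)
    (u : Fin i → α) (v : Fin (n - i) → β) : Fin n → α ⊕ β :=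
  fun x =>
    if h : x ∈ S then Sum.inl (u ((S.orderIsoOfFin hS).symm ⟨x, h⟩))
    else Sum.inr (v ((Sᶜ.orderIsoOfFin (gCompl_card S hS)).symm ⟨x, Finset.mem_compl.2 h⟩))

lemma gMix_left {S : Finset (Fin n)} (hS : S.card = i) {u : Fin i → α} {v : Fin (n - i) → β}
    {x : Fin n} (hx : x ∈ S) :
    gMix S hS u v x = Sum.inl (u ((S.orderIsoOfFin hS).symm ⟨x, hx⟩)) := dif_pos hx

lemma gMix_right {S : Finset (Fin n)} (hS : S.card = i) {u : Fin i → α} {v : Fin (n - i) → β}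
    {x : Fin n} (hx : x ∉ S) :
    gMix S hS u v x
      = Sum.inr (v ((Sᶜ.orderIsoOfFin (gCompl_card S hS)).symm ⟨x, Finset.mem_compl.2 hx⟩)) :=
  dif_neg hx

lemma gMix_iso {S : Finset (Fin n)} (hS : S.card = i) {u : Fin i → α} {v : Fin (n - i) → β}
    (j : Fin i) :
    gMix S hS u v ↑(S.orderIsoOfFin hS j) = Sum.inl (u j) := by
  rw [gMix_left hS (S.orderIsoOfFin hS j).2]
  congr 1
  have : (⟨↑(S.orderIsoOfFin hS j), (S.orderIsoOfFin hS j).2⟩ : {x // x ∈ S})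
      = S.orderIsoOfFin hS j := rfl
  rw [this, OrderIso.symm_apply_apply]

lemma gMix_iso' {S : Finset (Fin n)} (hS : S.card = i) {u : Fin i → α} {v : Fin (n - i) → β}
    (j : Fin (n - i)) :
    gMix S hS u v ↑(Sᶜ.orderIsoOfFin (gCompl_card S hS) j) = Sum.inr (v j) := by
  have hmem := (Sᶜ.orderIsoOfFin (gCompl_card S hS) j).2
  rw [gMix_right hS (Finset.mem_compl.1 hmem)]
  congr 1
  have : (⟨↑(Sᶜ.orderIsoOfFin (gCompl_card S hS) j), hmem⟩ : {x // x ∈ Sᶜ})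
      = Sᶜ.orderIsoOfFin (gCompl_card S hS) j := rfl
  rw [this, OrderIso.symm_apply_apply]

lemma gMix_same_S {S S' : Finset (Fin n)} (hS : S.card = i) (hS' : S'.card = i)
    {u u' : Fin i → α} {v v' : Fin (n - i) → β}
    (h : ∀ x, (gMix S hS u v x).isLeft = (gMix S' hS' u' v' x).isLeft) : S = S' := by
  ext x
  constructor
  · intro hx
    by_contra hx'
    have := h x
    rw [gMix_left hS hx, gMix_right hS' hx'] at this
    simp at this
  · intro hx
    by_contra hx'
    have := h x
    rw [gMix_right hS hx', gMix_left hS' hx] at this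
    simp at this

lemma gMix_inj {S S' : Finset (Fin n)} (hS : S.card = i) (hS' : S'.card = i)
    {u u' : Fin i → α} {v v' : Fin (n - i) → β}
    (h : gMix S hS u v = gMix S' hS' u' v') : S = S' ∧ u = u' ∧ v = v' := by
  have hSS : S = S' := gMix_same_S hS hS' (fun x => by rw [congrFun h x])
  subst hSS
  refine ⟨rfl, funext fun j => ?_, funext fun j => ?_⟩
  · have := congrFun h ↑(S.orderIsoOfFin hS j)
    rw [gMix_iso hS, gMix_iso hS'] at this
    exact Sum.inl.inj this
  · have := congrFun h ↑(Sᶜ.orderIsoOfFin (gCompl_card S hS) j)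
    have h2 := gMix_iso' (u := u') (v := v') hS' (S := S) j
    rw [gMix_iso' hS, h2] at this
    exact Sum.inr.inj this

end mix

section binom
variable {α β : Type*} [Fintype α] [Fintype β] (G₁ : SimpleGraph α) (G₂ : SimpleGraph β)

lemma gChoose_le (n i : ℕ) :
    n.choose i * (gIndepNum (gStrongPow G₁ i) * gIndepNum (gStrongPow G₂ (n - i))) ≤
      gIndepNum (gStrongPow (G₁ ⊕g G₂) n) := by
  classical
  obtain ⟨s, hs, hsi⟩ := exists_gIndep (gStrongPow G₁ i)
  obtain ⟨t, ht, hti⟩ := exists_gIndep (gStrongPow G₂ (n - i))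
  set X : Finset (Finset (Fin n) × ((Fin i → α) × (Fin (n - i) → β))) :=
    (Finset.univ.powersetCard i) ×ˢ (s ×ˢ t) with hX
  have hcardS : ∀ p : {p // p ∈ X}, p.1.1.card = i := fun p =>
    (Finset.mem_powersetCard.1 (Finset.mem_product.1 p.2).1).2
  set F : {p // p ∈ X} → (Fin n → α ⊕ β) :=
    fun p => gMix p.1.1 (hcardS p) p.1.2.1 p.1.2.2 with hF
  have hFinj : Function.Injective F := by
    rintro ⟨p, hp⟩ ⟨q, hq⟩ h
    obtain ⟨h1, h2, h3⟩ := gMix_inj _ _ h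
    exact Subtype.ext (Prod.ext h1 (Prod.ext h2 h3))
  have hcard : (X.attach.image F).card
      = n.choose i * (gIndepNum (gStrongPow G₁ i) * gIndepNum (gStrongPow G₂ (n - i))) := by
    rw [Finset.card_image_of_injective _ hFinj, Finset.card_attach, hX,
      Finset.card_product, Finset.card_product, Finset.card_powersetCard,
      Finset.card_univ, Fintype.card_fin, hs, ht]
  rw [← hcard]
  apply card_le_gIndepNum
  rintro w hw w' hw' hne hadj
  simp only [Finset.coe_image, Set.mem_image, Finset.mem_coe, Finset.mem_attach] at hw hw'
  obtain ⟨⟨⟨S, u, v⟩, hp⟩, -, rfl⟩ := hw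
  obtain ⟨⟨⟨S', u', v'⟩, hp'⟩, -, rfl⟩ := hw'
  obtain ⟨-, hco⟩ := hadj
  -- the two patterns agree
  have hS : S.card = i := hcardS ⟨_, hp⟩
  have hS' : S'.card = i := hcardS ⟨_, hp'⟩
  have hSS : S = S' := by
    refine gMix_same_S (u := u) (v := v) (u' := u') (v' := v') hS hS' (fun x => ?_)
    rcases hco x with h | h
    · rw [show (F ⟨(S,u,v), hp⟩) = gMix S hS u v from rfl,
        show (F ⟨(S',u',v'), hp'⟩) = gMix S' hS' u' v' from rfl] at h
      rw [h]
    · rcases h1 : gMix S hS u v x with a | a <;> rcases h2 : gMix S' hS' u' v' x with b | b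
      · simp
      · exfalso
        have := h
        rw [show (F ⟨(S,u,v), hp⟩) = gMix S hS u v from rfl,
          show (F ⟨(S',u',v'), hp'⟩) = gMix S' hS' u' v' from rfl, h1, h2] at this
        simpa using this
      · exfalso
        have := h
        rw [show (F ⟨(S,u,v), hp⟩) = gMix S hS u v from rfl,
          show (F ⟨(S',u',v'), hp'⟩) = gMix S' hS' u' v' from rfl, h1, h2] at this
        simpa using this
      · simp
  subst hSS
  have hu : u ∈ s := (Finset.mem_product.1 (Finset.mem_product.1 hp).2).1
  have hv : v ∈ t := (Finset.mem_product.1 (Finset.mem_product.1 hp).2).2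
  have hu' : u' ∈ s := (Finset.mem_product.1 (Finset.mem_product.1 hp').2).1
  have hv' : v' ∈ t := (Finset.mem_product.1 (Finset.mem_product.1 hp').2).2
  have hco' : ∀ x, gMix S hS u v x = gMix S hS' u' v' x ∨
      (G₁ ⊕g G₂).Adj (gMix S hS u v x) (gMix S hS' u' v' x) := hco
  have huu : u = u' := by
    by_contra huu
    refine hsi hu hu' huu ⟨huu, fun j => ?_⟩
    have := hco' ↑(S.orderIsoOfFin hS j)
    rw [gMix_iso hS, gMix_iso hS'] at this
    simpa using this
  have hvv : v = v' := by
    by_contra hvv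
    refine hti hv hv' hvv ⟨hvv, fun j => ?_⟩
    have := hco' ↑(Sᶜ.orderIsoOfFin (gCompl_card S hS) j)
    have h2 := gMix_iso' (u := u') (v := v') hS' (S := S) j
    rw [gMix_iso' hS, h2] at this
    simpa using this
  exact hne (by rw [show (F ⟨(S,u,v), hp⟩) = gMix S hS u v from rfl,
    show (F ⟨(S,u',v'), hp'⟩) = gMix S hS' u' v' from rfl, huu, hvv])

end binom

section analysis
open Real Filter

variable {α β : Type*} [Fintype α] [Fintype β]

lemma gNonempty_of_one_le {G : SimpleGraph α} {m : ℕ} (hm : 1 ≤ m)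
    (h : 1 ≤ gIndepNum (gStrongPow G m)) : Nonempty α := by
  obtain ⟨s, hs, -⟩ := exists_gIndep (gStrongPow G m)
  rw [← hs] at h
  obtain ⟨w, -⟩ := Finset.card_pos.1 h
  exact ⟨w ⟨0, hm⟩⟩

/-- `a^i ≤ α(G^i) * max(α(G^m), 1)` where `a = α(G^m)^(1/m)`. -/
lemma gPow_le (G : SimpleGraph α) {m : ℕ} (hm : 1 ≤ m) (i : ℕ) :
    ((gIndepNum (gStrongPow G m) : ℝ) ^ ((1:ℝ)/m)) ^ i
      ≤ (gIndepNum (gStrongPow G i) : ℝ) * max (gIndepNum (gStrongPow G m) : ℝ) 1 := by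
  have hmR : (m : ℝ) ≠ 0 := Nat.cast_ne_zero.2 (by omega)
  rcases Nat.eq_zero_or_pos (gIndepNum (gStrongPow G m)) with hA | hA
  · rw [hA]
    push_cast
    rw [Real.zero_rpow (by simpa using hmR)]
    rcases Nat.eq_zero_or_pos i with rfl | hi
    · have h0 := one_le_A0 G
      have : (1:ℝ) ≤ (gIndepNum (gStrongPow G 0) : ℝ) := by exact_mod_cast h0
      simpa using this
    · rw [zero_pow (by omega)]
      positivity
  · -- nonempty case
    have hne : Nonempty α := gNonempty_of_one_le hm hA
    have hAr : ∀ r : ℕ, 1 ≤ gIndepNum (gStrongPow G r) := fun r => one_le_gIndepNum _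
    set A : ℕ := gIndepNum (gStrongPow G m) with hAdef
    have hA1 : (1:ℝ) ≤ (A:ℝ) := by exact_mod_cast hA
    set a : ℝ := (A:ℝ) ^ ((1:ℝ)/m) with ha
    have ha1 : 1 ≤ a := by
      exact Real.one_le_rpow hA1 (one_div_nonneg.2 (Nat.cast_nonneg m))
    have ham : a ^ m = (A:ℝ) := by
      rw [ha, ← Real.rpow_natCast ((A:ℝ) ^ ((1:ℝ)/m)) m, ← Real.rpow_mul (by positivity),
        one_div, inv_mul_cancel₀ hmR, Real.rpow_one]
    have hmax : max (A:ℝ) 1 = (A:ℝ) := max_eq_left (by linarith)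
    rw [hmax]
    obtain ⟨q, r, hr, hqr⟩ : ∃ q r, r < m ∧ i = m * q + r :=
      ⟨i / m, i % m, Nat.mod_lt _ (by omega), (Nat.div_add_mod i m).symm ▸ rfl⟩
    subst hqr
    have key1 : a ^ (m * q + r) = ((A:ℝ) ^ q) * a ^ r := by
      rw [pow_add, pow_mul, ham]
    rw [key1]
    have h2 : a ^ r ≤ (A:ℝ) := by
      calc a ^ r ≤ a ^ m := pow_le_pow_right₀ ha1 (le_of_lt hr)
        _ = (A:ℝ) := ham
    have h3 : ((A:ℝ) ^ q) ≤ (gIndepNum (gStrongPow G (m * q)) : ℝ) := by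
      exact_mod_cast gIndepNum_pow_le G m q
    have h4 : (gIndepNum (gStrongPow G (m * q)) : ℝ)
        ≤ (gIndepNum (gStrongPow G (m * q + r)) : ℝ) := by
      have := gIndepNum_mul_le G (m * q) r
      have h5 : gIndepNum (gStrongPow G (m*q)) * 1 ≤
          gIndepNum (gStrongPow G (m*q)) * gIndepNum (gStrongPow G r) :=
        Nat.mul_le_mul_left _ (hAr r)
      exact_mod_cast le_trans (by omega) this
    calc (A:ℝ) ^ q * a ^ r ≤ (gIndepNum (gStrongPow G (m * q + r)) : ℝ) * (A:ℝ) := by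
          apply mul_le_mul (le_trans h3 h4) h2 (by positivity)
          positivity

lemma gSumBound (G₁ : SimpleGraph α) (G₂ : SimpleGraph β) {m : ℕ} (hm : 1 ≤ m) (n : ℕ) :
    (((gIndepNum (gStrongPow G₁ m) : ℝ) ^ ((1:ℝ)/m))
      + ((gIndepNum (gStrongPow G₂ m) : ℝ) ^ ((1:ℝ)/m))) ^ n
      ≤ ((n:ℝ) + 1) * (gIndepNum (gStrongPow (G₁ ⊕g G₂) n) : ℝ)
          * (max (gIndepNum (gStrongPow G₁ m) : ℝ) 1 * max (gIndepNum (gStrongPow G₂ m) : ℝ) 1) := by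
  set a : ℝ := (gIndepNum (gStrongPow G₁ m) : ℝ) ^ ((1:ℝ)/m) with hadef
  set b : ℝ := (gIndepNum (gStrongPow G₂ m) : ℝ) ^ ((1:ℝ)/m) with hbdef
  set A' : ℝ := max (gIndepNum (gStrongPow G₁ m) : ℝ) 1 with hA'
  set B' : ℝ := max (gIndepNum (gStrongPow G₂ m) : ℝ) 1 with hB'
  set Sn : ℝ := (gIndepNum (gStrongPow (G₁ ⊕g G₂) n) : ℝ) with hSn
  have ha0 : 0 ≤ a := Real.rpow_nonneg (by positivity) _
  have hb0 : 0 ≤ b := Real.rpow_nonneg (by positivity) _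
  have hA'0 : (0:ℝ) ≤ A' := le_trans zero_le_one (le_max_right _ _)
  have hB'0 : (0:ℝ) ≤ B' := le_trans zero_le_one (le_max_right _ _)
  rw [add_pow]
  have hterm : ∀ i ∈ Finset.range (n + 1),
      a ^ i * b ^ (n - i) * (n.choose i : ℝ) ≤ Sn * (A' * B') := by
    intro i hi
    have h1 : a ^ i ≤ (gIndepNum (gStrongPow G₁ i) : ℝ) * A' := gPow_le G₁ hm i
    have h2 : b ^ (n - i) ≤ (gIndepNum (gStrongPow G₂ (n - i)) : ℝ) * B' := gPow_le G₂ hm (n - i)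
    have h3 : a ^ i * b ^ (n - i)
        ≤ ((gIndepNum (gStrongPow G₁ i) : ℝ) * A') * ((gIndepNum (gStrongPow G₂ (n-i)) : ℝ) * B') :=
      mul_le_mul h1 h2 (by positivity) (by positivity)
    have h4 : a ^ i * b ^ (n - i) * (n.choose i : ℝ)
        ≤ ((n.choose i : ℝ) * ((gIndepNum (gStrongPow G₁ i) : ℝ)
            * (gIndepNum (gStrongPow G₂ (n-i)) : ℝ))) * (A' * B') := by
      calc a ^ i * b ^ (n - i) * (n.choose i : ℝ)
          ≤ (((gIndepNum (gStrongPow G₁ i) : ℝ) * A')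
              * ((gIndepNum (gStrongPow G₂ (n-i)) : ℝ) * B')) * (n.choose i : ℝ) :=
            mul_le_mul_of_nonneg_right h3 (by positivity)
        _ = ((n.choose i : ℝ) * ((gIndepNum (gStrongPow G₁ i) : ℝ)
              * (gIndepNum (gStrongPow G₂ (n-i)) : ℝ))) * (A' * B') := by ring
    refine le_trans h4 (mul_le_mul_of_nonneg_right ?_ (by positivity))
    rw [hSn]
    exact_mod_cast gChoose_le G₁ G₂ n i
  calc (Finset.range (n+1)).sum (fun i => a ^ i * b ^ (n - i) * (n.choose i : ℝ))
      ≤ (Finset.range (n+1)).card • (Sn * (A' * B')) := Finset.sum_le_card_nsmul _ _ _ hterm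
    _ = ((n:ℝ) + 1) * Sn * (A' * B') := by
        rw [Finset.card_range, nsmul_eq_mul]
        push_cast
        ring

end analysis

section capacity
open Real Filter

variable {α β : Type*} [Fintype α] [Fintype β]

lemma gCapacity_nonneg (G : SimpleGraph α) : 0 ≤ gShannonCapacity G :=
  Real.iSup_nonneg fun _ => Real.rpow_nonneg (Nat.cast_nonneg _) _

lemma gBddAbove (G : SimpleGraph α) :
    BddAbove (Set.range fun k : ℕ =>
      (gIndepNum (gStrongPow G (k + 1)) : ℝ) ^ ((1 : ℝ) / (k + 1))) := by
  refine ⟨(Fintype.card α : ℝ), ?_⟩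
  rintro x ⟨k, rfl⟩
  have h1 : gIndepNum (gStrongPow G (k+1)) ≤ Fintype.card α ^ (k+1) := by
    have := gIndepNum_le (gStrongPow G (k+1))
    rwa [Fintype.card_fun, Fintype.card_fin] at this
  have h2 : ((gIndepNum (gStrongPow G (k+1)) : ℝ)) ^ ((1:ℝ)/(k+1))
      ≤ ((Fintype.card α : ℝ) ^ ((k+1 : ℕ))) ^ ((1:ℝ)/(k+1)) :=
    Real.rpow_le_rpow (by positivity) (by exact_mod_cast h1) (by positivity)
  refine le_trans h2 ?_
  rw [← Real.rpow_natCast (Fintype.card α : ℝ) (k+1), ← Real.rpow_mul (by positivity),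
    show ((k+1:ℕ):ℝ) * ((1:ℝ)/(k+1)) = 1 by push_cast; field_simp, Real.rpow_one]

lemma gTerm_le (G : SimpleGraph α) (k : ℕ) :
    (gIndepNum (gStrongPow G (k + 1)) : ℝ) ^ ((1 : ℝ) / (k + 1)) ≤ gShannonCapacity G := by
  unfold gShannonCapacity
  exact le_ciSup (gBddAbove G) k

lemma gKey (G₁ : SimpleGraph α) (G₂ : SimpleGraph β) {m : ℕ} (hm : 1 ≤ m) :
    (gIndepNum (gStrongPow G₁ m) : ℝ) ^ ((1:ℝ)/m)
      + (gIndepNum (gStrongPow G₂ m) : ℝ) ^ ((1:ℝ)/m)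
      ≤ gShannonCapacity (G₁ ⊕g G₂) := by
  set c : ℝ := gShannonCapacity (G₁ ⊕g G₂) with hc
  set a : ℝ := (gIndepNum (gStrongPow G₁ m) : ℝ) ^ ((1:ℝ)/m) with hadef
  set b : ℝ := (gIndepNum (gStrongPow G₂ m) : ℝ) ^ ((1:ℝ)/m) with hbdef
  set K : ℝ := max (gIndepNum (gStrongPow G₁ m) : ℝ) 1 * max (gIndepNum (gStrongPow G₂ m) : ℝ) 1
    with hK
  have hK1 : (1:ℝ) ≤ K := by
    rw [hK]
    calc (1:ℝ) = 1 * 1 := by ring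
      _ ≤ _ := mul_le_mul (le_max_right _ _) (le_max_right _ _) zero_le_one
          (le_trans zero_le_one (le_max_right _ _))
  have hKpos : (0:ℝ) < K := lt_of_lt_of_le one_pos hK1
  have ha0 : 0 ≤ a := Real.rpow_nonneg (by positivity) _
  have hb0 : 0 ≤ b := Real.rpow_nonneg (by positivity) _
  have hab : 0 ≤ a + b := by linarith
  have hc0 : 0 ≤ c := gCapacity_nonneg _
  have step : ∀ k : ℕ, a + b ≤ ((((k:ℝ)+1)+1) * K) ^ ((1:ℝ)/((k:ℝ)+1)) * c := by
    intro k
    have hB := gSumBound G₁ G₂ hm (k+1)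
    rw [← hadef, ← hbdef] at hB
    have hn : ((k+1:ℕ):ℝ) = (k:ℝ)+1 := by push_cast; ring
    set Sn : ℝ := (gIndepNum (gStrongPow (G₁ ⊕g G₂) (k+1)) : ℝ) with hSn
    have hSn0 : 0 ≤ Sn := by rw [hSn]; positivity
    have hB' : (a+b)^(k+1) ≤ ((((k:ℝ)+1)+1) * K) * Sn := by
      rw [hn] at hB
      calc (a+b)^(k+1) ≤ (((k:ℝ)+1)+1) * Sn * K := by
            convert hB using 2 <;> push_cast <;> ring
        _ = ((((k:ℝ)+1)+1) * K) * Sn := by ring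
    have h1 : a + b = ((a+b)^(k+1)) ^ ((1:ℝ)/((k:ℝ)+1)) := by
      rw [← Real.rpow_natCast (a+b) (k+1), ← Real.rpow_mul hab]
      rw [show ((k+1:ℕ):ℝ) * ((1:ℝ)/((k:ℝ)+1)) = 1 by push_cast; field_simp]
      rw [Real.rpow_one]
    rw [h1]
    calc ((a+b)^(k+1)) ^ ((1:ℝ)/((k:ℝ)+1))
        ≤ (((((k:ℝ)+1)+1) * K) * Sn) ^ ((1:ℝ)/((k:ℝ)+1)) :=
          Real.rpow_le_rpow (by positivity) hB' (by positivity)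
      _ = ((((k:ℝ)+1)+1) * K) ^ ((1:ℝ)/((k:ℝ)+1)) * Sn ^ ((1:ℝ)/((k:ℝ)+1)) :=
          Real.mul_rpow (by positivity) hSn0
      _ ≤ ((((k:ℝ)+1)+1) * K) ^ ((1:ℝ)/((k:ℝ)+1)) * c := by
          refine mul_le_mul_of_nonneg_left ?_ (Real.rpow_nonneg (by positivity) _)
          rw [hSn]
          have := gTerm_le (G₁ ⊕g G₂) k
          rw [← hc] at this
          convert this using 3
          all_goals (push_cast; ring)
  have hlim : Tendsto (fun k : ℕ => ((((k:ℝ)+1)+1) * K) ^ ((1:ℝ)/((k:ℝ)+1)) * c)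
      atTop (nhds (1 * c)) := by
    refine Tendsto.mul_const _ ?_
    have hpos : ∀ k : ℕ, (0:ℝ) < (((k:ℝ)+1)+1) * K := fun k => by positivity
    have heq : ∀ k : ℕ, ((((k:ℝ)+1)+1) * K) ^ ((1:ℝ)/((k:ℝ)+1))
        = Real.exp ((Real.log (((k:ℝ)+1)+1) + Real.log K) * ((1:ℝ)/((k:ℝ)+1))) := by
      intro k
      rw [Real.rpow_def_of_pos (hpos k)]
      congr 2
      rw [Real.log_mul (by positivity) (by positivity)]
    have h2 : Tendsto (fun k : ℕ => Real.log K * ((1:ℝ)/((k:ℝ)+1))) atTop (nhds 0) := by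
      have := tendsto_one_div_add_atTop_nhds_zero_nat.const_mul (Real.log K)
      simpa using this
    have h1 : Tendsto (fun k : ℕ => Real.log (((k:ℝ)+1)+1) * ((1:ℝ)/((k:ℝ)+1)))
        atTop (nhds 0) := by
      have hbase := Real.tendsto_pow_log_div_mul_add_atTop 1 (-1) 1 one_ne_zero
      have hcomp : Tendsto (fun k : ℕ => ((k:ℝ)+2)) atTop atTop :=
        tendsto_atTop_add_const_right atTop 2 tendsto_natCast_atTop_atTop
      have := hbase.comp hcomp
      refine this.congr (fun k => ?_)
      simp only [Function.comp_apply]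
      rw [pow_one, show (1:ℝ)*((k:ℝ)+2)+(-1) = (k:ℝ)+1 by ring,
        show ((k:ℝ)+1)+1 = (k:ℝ)+2 by ring, div_eq_mul_one_div]
    have hsum : Tendsto (fun k : ℕ =>
        (Real.log (((k:ℝ)+1)+1) + Real.log K) * ((1:ℝ)/((k:ℝ)+1))) atTop (nhds 0) := by
      have := h1.add h2
      rw [add_zero] at this
      refine this.congr (fun k => ?_)
      ring
    have := (Real.continuous_exp.continuousAt (x := 0)).tendsto.comp hsum
    rw [Real.exp_zero] at this
    refine Tendsto.congr (fun k => ?_) this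
    rw [Function.comp_apply, heq k]
  have := ge_of_tendsto' hlim step
  rwa [one_mul] at this

lemma gMono (G : SimpleGraph α) (k l : ℕ) :
    (gIndepNum (gStrongPow G (k+1)) : ℝ) ^ ((1:ℝ)/(k+1))
      ≤ (gIndepNum (gStrongPow G ((k+1)*(l+1))) : ℝ) ^ ((1:ℝ)/(((k+1)*(l+1) : ℕ) : ℝ)) := by
  have hnat : gIndepNum (gStrongPow G (k+1)) ^ (l+1)
      ≤ gIndepNum (gStrongPow G ((k+1)*(l+1))) := gIndepNum_pow_le G (k+1) (l+1)
  have hcast : ((gIndepNum (gStrongPow G (k+1)) : ℝ)) ^ ((l+1 : ℕ))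
      ≤ (gIndepNum (gStrongPow G ((k+1)*(l+1))) : ℝ) := by exact_mod_cast hnat
  have h1 : (((gIndepNum (gStrongPow G (k+1)) : ℝ)) ^ ((l+1:ℕ))) ^ ((1:ℝ)/(((k+1)*(l+1):ℕ):ℝ))
      ≤ (gIndepNum (gStrongPow G ((k+1)*(l+1))) : ℝ) ^ ((1:ℝ)/(((k+1)*(l+1):ℕ):ℝ)) :=
    Real.rpow_le_rpow (by positivity) hcast (by positivity)
  refine le_trans (le_of_eq ?_) h1
  rw [← Real.rpow_natCast ((gIndepNum (gStrongPow G (k+1)) : ℝ)) (l+1),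
    ← Real.rpow_mul (by positivity)]
  congr 1
  have hk : ((k:ℝ)+1) ≠ 0 := by positivity
  have hl : ((l:ℝ)+1) ≠ 0 := by positivity
  push_cast
  field_simp
  all_goals ring

end capacity


/-- For all finite simple graphs `G₁`, `G₂`, the Shannon capacity of the disjoint
union satisfies `c(G₁ + G₂) ≥ c(G₁) + c(G₂)`. -/
theorem shannonCapacity_sum_ge
    {α β : Type*} [Fintype α] [Fintype β] (G₁ : SimpleGraph α) (G₂ : SimpleGraph β) :
    gShannonCapacity G₁ + gShannonCapacity G₂ ≤ gShannonCapacity (G₁ ⊕g G₂) := by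

  have key : ∀ k l : ℕ,
      (gIndepNum (gStrongPow G₁ (k+1)) : ℝ) ^ ((1:ℝ)/(k+1))
        + (gIndepNum (gStrongPow G₂ (l+1)) : ℝ) ^ ((1:ℝ)/(l+1))
        ≤ gShannonCapacity (G₁ ⊕g G₂) := by
    intro k l
    have h1 := gMono G₁ k l
    have h2 := gMono G₂ l k
    rw [Nat.mul_comm (l+1) (k+1)] at h2
    have hm : 1 ≤ (k+1)*(l+1) :=
      Nat.one_le_iff_ne_zero.2 (Nat.mul_ne_zero (Nat.succ_ne_zero k) (Nat.succ_ne_zero l))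
    have h3 := gKey G₁ G₂ hm
    linarith
  have h2 : ∀ k : ℕ, gShannonCapacity G₂
      ≤ gShannonCapacity (G₁ ⊕g G₂)
        - (gIndepNum (gStrongPow G₁ (k+1)) : ℝ) ^ ((1:ℝ)/(k+1)) := by
    intro k
    unfold gShannonCapacity
    refine ciSup_le fun l => ?_
    have := key k l
    unfold gShannonCapacity at this
    linarith
  have h1 : gShannonCapacity G₁
      ≤ gShannonCapacity (G₁ ⊕g G₂) - gShannonCapacity G₂ := by
    conv_lhs => unfold gShannonCapacity
    refine ciSup_le fun k => ?_
    have := h2 k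
    linarith
  linarith
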